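/- Let G be a finite simple graph, s a vertex of G, and X ⊆ V(G) with |X| = l such that G ∖ X is a clique. Then every optimal strategy for the firefighting process on (G, s) defends at most l + 1 vertices. -/

import Mathlib

open SimpleGraph

variable {V : Type*}

/-- The set of vertices burned by the end of time step `i` (0-indexed: `burnt G s S i` is `B_i`),
when a fire starts at `s` and the firefighter defends the vertices of the list `S` in order. -/
def burnt (G : SimpleGraph V) (s : V) (S : List V) : ℕ → Set V
  | 0 => {s}
  | i + 1 => burnt G s S i ∪
      {u | u ∉ S.take (i + 1) ∧ ∃ b ∈ burnt G s S i, G.Adj u b}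

/-- The set of all vertices ever burned by the strategy `S`. -/
def BurntSet (G : SimpleGraph V) (s : V) (S : List V) : Set V := ⋃ i, burnt G s S i

/-- A strategy is a sequence of pairwise distinct vertices; it is valid if the vertex defended
at each step is not yet burning at the start of that step. -/
def ValidStrategy (G : SimpleGraph V) (s : V) (S : List V) : Prop :=
  S.Nodup ∧ ∀ (i : ℕ) (h : i < S.length), S.get ⟨i, h⟩ ∉ burnt G s S i

/-- The number of vertices saved (i.e. not burned) by the strategy `S`. -/
noncomputable def sav (G : SimpleGraph V) (s : V) (S : List V) : ℕ := (BurntSet G s S)ᶜ.ncard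

/-- A valid strategy is minimal if every proper subsequence of it which is itself a valid
strategy saves strictly fewer vertices. -/
def MinimalStrategy (G : SimpleGraph V) (s : V) (S : List V) : Prop :=
  ValidStrategy G s S ∧ ∀ S' : List V, S'.Sublist S → S' ≠ S → ValidStrategy G s S' →
    sav G s S' < sav G s S

/-- A strategy is optimal if it is minimal and saves the maximum number of vertices. -/
def OptimalStrategy (G : SimpleGraph V) (s : V) (S : List V) : Prop :=
  MinimalStrategy G s S ∧ ∀ S' : List V, ValidStrategy G s S' → sav G s S' ≤ sav G s S

/-- A walk is an induced path if it is a path and the subgraph induced on its vertices has no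
edges besides the edges of the path. -/
def IsInducedPath (G : SimpleGraph V) {a b : V} (p : G.Walk a b) : Prop :=
  p.IsPath ∧ ∀ x ∈ p.support, ∀ y ∈ p.support, G.Adj x y → p.toSubgraph.Adj x y

/-- `u` is reachable from `s` in the subgraph of `G` induced on the complement of `A`. -/
def ReachAvoiding (G : SimpleGraph V) (A : Set V) (s u : V) : Prop :=
  ∃ p : G.Walk s u, ∀ x ∈ p.support, x ∉ A

section helpers
variable (G : SimpleGraph V) (s : V) (S : List V)

lemma burnt_succ_subset (i : ℕ) : burnt G s S i ⊆ burnt G s S (i+1) :=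
  fun _ hx => Or.inl hx

lemma burnt_mono {i j : ℕ} (h : i ≤ j) : burnt G s S i ⊆ burnt G s S j := by
  induction j with
  | zero => simp_all
  | succ j ih =>
    rcases Nat.lt_or_ge i (j+1) with h1 | h1
    · exact (ih (by omega)).trans (burnt_succ_subset G s S j)
    · have : i = j + 1 := by omega
      simp [this]

lemma mem_burnt_succ {i : ℕ} {u b : V} (hu : u ∉ S.take (i+1))
    (hb : b ∈ burnt G s S i) (hadj : G.Adj u b) : u ∈ burnt G s S (i+1) :=
  Or.inr ⟨hu, b, hb, hadj⟩

lemma mem_take_mono {m n : ℕ} (h : m ≤ n) {x : V} (hx : x ∈ S.take m) : x ∈ S.take n := by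
  obtain ⟨i, hi, rfl⟩ := List.mem_take_iff_getElem.1 hx
  simp only [lt_inf_iff] at hi
  exact List.mem_take_iff_getElem.2 ⟨i, by simp only [lt_inf_iff]; omega, rfl⟩

lemma burnt_stall {j : ℕ} (h : burnt G s S (j+1) = burnt G s S j) :
    ∀ k, j ≤ k → burnt G s S k = burnt G s S j := by
  intro k hk
  induction k with
  | zero => have : j = 0 := by omega
            simp [this]
  | succ k ih =>
    rcases Nat.lt_or_ge j (k+1) with h1 | h1
    · have hkj : j ≤ k := by omega
      have hIH := ih hkj
      apply Set.Subset.antisymm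
      · intro u hu
        rcases hu with hu | ⟨hnt, b, hb, hadj⟩
        · rwa [hIH] at hu
        · have hb' : b ∈ burnt G s S j := by rwa [hIH] at hb
          have hnt' : u ∉ S.take (j+1) := fun hm => hnt (mem_take_mono S (by omega) hm)
          have : u ∈ burnt G s S (j+1) := mem_burnt_succ G s S hnt' hb' hadj
          rwa [h] at this
      · exact burnt_mono G s S (by omega)
    · have : j = k + 1 := by omega
      simp [this]

lemma burntSet_eq_of_stall {j : ℕ} (h : burnt G s S (j+1) = burnt G s S j) :
    BurntSet G s S = burnt G s S j := by
  apply Set.Subset.antisymm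
  · apply Set.iUnion_subset
    intro k
    rcases Nat.lt_or_ge k j with h1 | h1
    · exact burnt_mono G s S (by omega)
    · exact (burnt_stall G s S h k h1).le
  · exact Set.subset_iUnion _ j

lemma defended_not_burnt (hv : ValidStrategy G s S) {q : ℕ} (hq : q < S.length) :
    ∀ k, S.get ⟨q, hq⟩ ∉ burnt G s S k := by
  intro k
  induction k with
  | zero => exact fun h => hv.2 q hq (burnt_mono G s S (Nat.zero_le q) h)
  | succ k ih =>
    intro h
    rcases h with h | ⟨hnt, b, hb, hadj⟩
    · exact ih h
    · rcases Nat.lt_or_ge k q with h1 | h1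
      · exact hv.2 q hq (burnt_mono G s S h1 (mem_burnt_succ G s S hnt hb hadj))
      · exact hnt (List.mem_take_iff_getElem.2 ⟨q, by simp only [lt_inf_iff]; omega, rfl⟩)

lemma burnt_chain_card [Finite V] (n : ℕ)
    (h : ∀ k < n, burnt G s S k ≠ burnt G s S (k+1)) :
    n + 1 ≤ (burnt G s S n).ncard := by
  induction n with
  | zero => simp [burnt, Set.ncard_singleton]
  | succ n ih =>
    have h1 : n + 1 ≤ (burnt G s S n).ncard := ih (fun k hk => h k (by omega))
    have h2 : (burnt G s S n).ncard < (burnt G s S (n+1)).ncard :=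
      Set.ncard_lt_ncard ⟨burnt_succ_subset G s S n,
        fun hsub => h n (by omega) (Set.Subset.antisymm (burnt_succ_subset G s S n) hsub)⟩
        (Set.toFinite _)
    omega

lemma mem_take_eraseIdx {p : ℕ} (hp : p < S.length) {j : ℕ} {x : V}
    (hx : x ∈ S.take j) (hne : x ≠ S.get ⟨p, hp⟩) : x ∈ (S.eraseIdx p).take j := by
  obtain ⟨q, hq, rfl⟩ := List.mem_take_iff_getElem.1 hx
  simp only [lt_inf_iff] at hq
  have hlen : (S.eraseIdx p).length = S.length - 1 := by
    rw [List.length_eraseIdx]; simp [hp]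
  have hqp : q ≠ p := by
    intro h; subst h; exact hne rfl
  rcases Nat.lt_or_ge q p with h1 | h1
  · refine List.mem_take_iff_getElem.2 ⟨q, by simp only [lt_inf_iff]; omega, ?_⟩
    rw [List.getElem_eraseIdx]
    simp [h1]
  · have h2 : p < q := by omega
    refine List.mem_take_iff_getElem.2 ⟨q - 1, by simp only [lt_inf_iff]; omega, ?_⟩
    rw [List.getElem_eraseIdx]
    have hh : ¬ (q - 1 < p) := by omega
    simp only [hh, dite_false]
    congr 1
    omega

lemma defended_has_burnt_neighbor [Finite V] (hmin : MinimalStrategy G s S)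
    {p : ℕ} (hp : p < S.length) :
    ∃ b ∈ BurntSet G s S, G.Adj (S.get ⟨p, hp⟩) b := by
  by_contra hcon
  push_neg at hcon
  set c := S.get ⟨p, hp⟩ with hc
  set S' := S.eraseIdx p with hS'
  have hlen : S'.length = S.length - 1 := by
    rw [hS', List.length_eraseIdx]; simp [hp]
  have hsub : ∀ k, burnt G s S' k ⊆ burnt G s S k := by
    intro k
    induction k with
    | zero => exact subset_rfl
    | succ k ih =>
      intro u hu
      rcases hu with hu | ⟨hnt, b, hb, hadj⟩
      · exact burnt_succ_subset G s S k (ih hu)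
      · have hbB : b ∈ burnt G s S k := ih hb
        have hub : u ≠ c := by
          rintro rfl
          exact hcon b (Set.mem_iUnion.2 ⟨k, hbB⟩) hadj
        have hnt' : u ∉ S.take (k+1) := fun hm => hnt (mem_take_eraseIdx S hp hm hub)
        exact mem_burnt_succ G s S hnt' hbB hadj
  have hvalid := hmin.1
  have hv' : ValidStrategy G s S' := by
    constructor
    · exact hvalid.1.sublist (List.eraseIdx_sublist S p)
    · intro i hi
      have hget := List.getElem_eraseIdx (l := S) (i := p) (j := i) (by rwa [← hS'])
      rcases Nat.lt_or_ge i p with h1 | h1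
      · have hiS : i < S.length := by omega
        have : S'.get ⟨i, hi⟩ = S.get ⟨i, hiS⟩ := by
          simp only [List.get_eq_getElem, hS'] at *
          rw [hget]; simp [h1]
        rw [this]
        intro hmem
        exact hvalid.2 i hiS (burnt_mono G s S le_rfl (hsub i hmem))
      · have hiS : i + 1 < S.length := by omega
        have : S'.get ⟨i, hi⟩ = S.get ⟨i + 1, hiS⟩ := by
          simp only [List.get_eq_getElem, hS'] at *
          rw [hget]; simp [Nat.not_lt.2 h1]
        rw [this]
        intro hmem
        exact hvalid.2 (i+1) hiS (burnt_mono G s S (by omega) (hsub i hmem))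
  have hne : S' ≠ S := by
    intro h
    have := congrArg List.length h
    rw [hlen] at this
    omega
  have hlt := hmin.2 S' (List.eraseIdx_sublist S p) hne hv'
  have hBsub : BurntSet G s S' ⊆ BurntSet G s S := by
    apply Set.iUnion_subset
    intro k
    exact (hsub k).trans (Set.subset_iUnion _ k)
  have hge : sav G s S ≤ sav G s S' :=
    Set.ncard_le_ncard (Set.compl_subset_compl.2 hBsub) (Set.toFinite _)
  omega

end helpers

/-- If `X ⊆ V(G)` has size `l` and `G ∖ X` is a clique, then every optimal
strategy for the firefighting process on `(G, s)` defends at most `l + 1` vertices. -/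
theorem optimal_strategy_le_of_clique_modulator {V : Type*} [Fintype V] (G : SimpleGraph V)
    (s : V) (X : Finset V) (l : ℕ) (hX : X.card = l)
    (hclique : ∀ u ∉ X, ∀ v ∉ X, u ≠ v → G.Adj u v)
    (S : List V) (hS : OptimalStrategy G s S) :
    S.length ≤ l + 1 := by
  classical
  by_contra hcon
  push_neg at hcon
  obtain ⟨hmin, -⟩ := hS
  have hvalid := hmin.1
  set m := S.length with hm
  set A : Finset (Fin m) := Finset.univ.filter (fun q => S.get q ∈ X) with hA
  set Cd : Finset (Fin m) := Finset.univ.filter (fun q => S.get q ∉ X) with hCd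
  have hsplit : A.card + Cd.card = m := by
    rw [hA, hCd, Finset.card_filter_add_card_filter_not]
    simp
  have hAinj : Set.InjOn (fun q : Fin m => S.get q) A := by
    intro a _ b _ hab
    exact (hvalid.1.get_inj_iff).1 hab
  have hCdne : Cd.Nonempty := by
    by_contra hemp
    rw [Finset.not_nonempty_iff_eq_empty] at hemp
    have hAle : A.card ≤ l := by
      rw [← hX]
      apply Finset.card_le_card_of_injOn (fun q => S.get q) _ hAinj
      intro q hq
      simpa [hA] using hq
    rw [hemp] at hsplit
    simp at hsplit
    omega
  set p := Cd.max' hCdne with hp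
  have hpC : p ∈ Cd := Cd.max'_mem hCdne
  have hcX : S.get p ∉ X := by simpa [hCd] using hpC
  set c := S.get p with hc
  rcases Nat.eq_zero_or_pos p.val with hp0 | hp1
  · -- p = 0 : at most one clique defense
    have hCd1 : Cd.card ≤ 1 := by
      apply Finset.card_le_one.2
      intro a ha b hb
      have ha' : a.val ≤ p.val := Cd.le_max' a ha
      have hb' : b.val ≤ p.val := Cd.le_max' b hb
      apply Fin.ext
      omega
    have hAle : A.card ≤ l := by
      rw [← hX]
      apply Finset.card_le_card_of_injOn (fun q => S.get q) _ hAinj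
      intro q hq
      simpa [hA] using hq
    omega
  · -- p ≥ 1
    obtain ⟨b0, hb0, hadj0⟩ :=
      defended_has_burnt_neighbor G s S hmin p.isLt
    have hearly : ∀ b ∈ burnt G s S (p.val - 1), ¬ G.Adj c b := by
      intro b hb hadj
      have hctk : c ∉ S.take (p.val - 1 + 1) := by
        intro hmem
        obtain ⟨q, hq, heq⟩ := List.mem_take_iff_getElem.1 hmem
        simp only [lt_inf_iff] at hq
        have hqlt : q < m := hq.2
        have : (⟨q, hqlt⟩ : Fin m) = p := by
          apply (hvalid.1.get_inj_iff).1
          simpa [hc, List.get_eq_getElem] using heq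
        have : q = p.val := by rw [← this]
        omega
      have hcb : c ∈ burnt G s S (p.val - 1 + 1) :=
        mem_burnt_succ G s S hctk hb hadj
      have hpe : p.val - 1 + 1 = p.val := by omega
      rw [hpe] at hcb
      exact hvalid.2 p.val p.isLt hcb
    have hBX : ∀ u ∈ burnt G s S (p.val - 1), u ∈ X := by
      intro u hu
      by_contra huX
      have hune : u ≠ c := by
        rintro rfl
        exact hvalid.2 p.val p.isLt (burnt_mono G s S (by omega) hu)
      exact hearly u hu (hclique c hcX u huX hune.symm)
    have hchain : ∀ k < p.val - 1, burnt G s S k ≠ burnt G s S (k+1) := by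
      intro k hk heq
      have hstall := burntSet_eq_of_stall G s S heq.symm
      have : b0 ∈ burnt G s S (p.val - 1) := by
        rw [hstall] at hb0
        exact burnt_mono G s S (by omega) hb0
      exact hearly b0 this hadj0
    have hcard1 : p.val ≤ (burnt G s S (p.val - 1)).ncard := by
      have := burnt_chain_card G s S (p.val - 1) hchain
      omega
    set Bf := (Set.toFinite (burnt G s S (p.val - 1))).toFinset with hBf
    have hBcard : p.val ≤ Bf.card := by
      rwa [← Set.ncard_eq_toFinset_card (burnt G s S (p.val - 1)) (Set.toFinite _)]
    have hBsubX : Bf ⊆ X := by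
      intro u hu
      exact hBX u (by simpa [hBf] using hu)
    have hAimage : A.image (fun q => S.get q) ⊆ X \ Bf := by
      intro x hx
      obtain ⟨q, hq, rfl⟩ := Finset.mem_image.1 hx
      refine Finset.mem_sdiff.2 ⟨by simpa [hA] using hq, ?_⟩
      intro hmem
      exact defended_not_burnt G s S hvalid q.isLt (p.val - 1)
        (by simpa [hBf] using hmem)
    have hAcard : A.card ≤ (X \ Bf).card := by
      rw [← Finset.card_image_of_injOn hAinj]
      exact Finset.card_le_card hAimage
    have hsdiff : (X \ Bf).card = X.card - Bf.card := Finset.card_sdiff_of_subset hBsubX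
    have hBfl : Bf.card ≤ l := by rw [← hX]; exact Finset.card_le_card hBsubX
    have hCdcard : Cd.card ≤ p.val + 1 := by
      have : Cd.image (fun q : Fin m => q.val) ⊆ Finset.range (p.val + 1) := by
        intro x hx
        obtain ⟨q, hq, rfl⟩ := Finset.mem_image.1 hx
        have := Cd.le_max' q hq
        simp only [Finset.mem_range]
        omega
      calc Cd.card = (Cd.image (fun q : Fin m => q.val)).card := by
            rw [Finset.card_image_of_injective _ Fin.val_injective]
        _ ≤ (Finset.range (p.val + 1)).card := Finset.card_le_card this
        _ = p.val + 1 := by simp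
    omega
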